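/- For any even natural number ℓ and any real number x with |x| ≤ ℓ/2, one has E_ℓ(x) · E_ℓ(-x) ≥ 1, where E_ℓ(x) = ∑_{j=0}^{ℓ} x^j/j!. -/

import Mathlib

lemma hasDerivAt_truncExp (ℓ : ℕ) (x : ℝ) :
    HasDerivAt (fun y : ℝ => ∑ j ∈ Finset.range (ℓ + 1), y ^ j / (Nat.factorial j))
      (∑ j ∈ Finset.range ℓ, x ^ j / (Nat.factorial j)) x := by
  have h : HasDerivAt (fun y : ℝ => ∑ j ∈ Finset.range (ℓ + 1), y ^ j / (Nat.factorial j))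
      (∑ j ∈ Finset.range (ℓ + 1), ((j : ℝ) * x ^ (j - 1)) / (Nat.factorial j)) x := by
    apply HasDerivAt.fun_sum
    intro j _
    simpa using (hasDerivAt_pow j x).div_const (Nat.factorial j : ℝ)
  convert h using 1
  rw [Finset.sum_range_succ']
  simp only [Nat.cast_zero, pow_zero, zero_mul, zero_div, add_zero]
  apply Finset.sum_congr rfl
  intro i _
  have hfac : ((Nat.factorial (i + 1) : ℝ)) = (i + 1) * Nat.factorial i := by
    rw [Nat.factorial_succ]; push_cast; ring
  have h1 : ((i : ℝ) + 1) ≠ 0 := by positivity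
  have h2 : (Nat.factorial i : ℝ) ≠ 0 := Nat.cast_ne_zero.mpr (Nat.factorial_ne_zero i)
  rw [hfac]
  push_cast
  field_simp

lemma truncExp_aux (ℓ : ℕ) (hℓ : Even ℓ) (x : ℝ) (hx : 0 ≤ x) :
    1 ≤ (∑ j ∈ Finset.range (ℓ + 1), x ^ j / (Nat.factorial j)) *
      (∑ j ∈ Finset.range (ℓ + 1), (-x) ^ j / (Nat.factorial j)) := by
  set g : ℝ → ℝ := fun y => ∑ j ∈ Finset.range (ℓ + 1), y ^ j / (Nat.factorial j) with hg
  set f : ℝ → ℝ := fun y => g y * g (-y) with hf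
  have hd : ∀ y : ℝ, HasDerivAt f ((y ^ ℓ / Nat.factorial ℓ) * (g y - g (-y))) y := by
    intro y
    have h1 : HasDerivAt g (∑ j ∈ Finset.range ℓ, y ^ j / (Nat.factorial j)) y :=
      hasDerivAt_truncExp ℓ y
    have h2 : HasDerivAt (fun y : ℝ => g (-y))
        ((∑ j ∈ Finset.range ℓ, (-y) ^ j / (Nat.factorial j)) * (-1)) y :=
      HasDerivAt.comp y (hasDerivAt_truncExp ℓ (-y)) (hasDerivAt_neg y)
    have := h1.mul h2
    refine this.congr_deriv ?_
    have e1 : g y = (∑ j ∈ Finset.range ℓ, y ^ j / (Nat.factorial j)) + y ^ ℓ / Nat.factorial ℓ := by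
      rw [hg]; exact Finset.sum_range_succ _ _
    have e2 : g (-y) = (∑ j ∈ Finset.range ℓ, (-y) ^ j / (Nat.factorial j))
        + y ^ ℓ / Nat.factorial ℓ := by
      have : g (-y) = ∑ j ∈ Finset.range (ℓ + 1), (-y) ^ j / (Nat.factorial j : ℝ) := rfl
      rw [this, Finset.sum_range_succ, hℓ.neg_pow]
    rw [e1, e2]; ring
  have hmono : MonotoneOn f (Set.Ici (0 : ℝ)) := by
    apply monotoneOn_of_deriv_nonneg (convex_Ici 0)
    · exact fun y _ => (hd y).continuousAt.continuousWithinAt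
    · exact fun y _ => (hd y).differentiableAt.differentiableWithinAt
    · intro y hy
      rw [interior_Ici] at hy
      rw [(hd y).deriv]
      have hyp : (0 : ℝ) ≤ y := le_of_lt hy
      have h1 : 0 ≤ y ^ ℓ / Nat.factorial ℓ := by positivity
      have h2 : g (-y) ≤ g y := by
        apply Finset.sum_le_sum
        intro j _
        apply div_le_div_of_nonneg_right _ (by positivity)
        calc (-y) ^ j ≤ |(-y) ^ j| := le_abs_self _
          _ = |y| ^ j := by rw [abs_pow, abs_neg]
          _ = y ^ j := by rw [abs_of_nonneg hyp]
      exact mul_nonneg h1 (sub_nonneg.mpr h2)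
  have h0 : f 0 = 1 := by
    simp [hf, hg, Finset.sum_range_succ']
  calc (1 : ℝ) = f 0 := h0.symm
    _ ≤ f x := hmono (Set.self_mem_Ici) (Set.mem_Ici.mpr hx) hx

/-- For even `ℓ` and `|x| ≤ ℓ/2`, one has `E_ℓ(x) · E_ℓ(-x) ≥ 1`. -/
theorem truncated_exp_mul_ge_one (ℓ : ℕ) (hℓ : Even ℓ) (x : ℝ) (hx : |x| ≤ (ℓ : ℝ) / 2) :
    1 ≤ (∑ j ∈ Finset.range (ℓ + 1), x ^ j / (Nat.factorial j)) *
      (∑ j ∈ Finset.range (ℓ + 1), (-x) ^ j / (Nat.factorial j)) := by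
  rcases le_or_gt 0 x with h | h
  · exact truncExp_aux ℓ hℓ x h
  · have := truncExp_aux ℓ hℓ (-x) (by linarith)
    rw [neg_neg] at this
    linarith [this, mul_comm (∑ j ∈ Finset.range (ℓ + 1), (-x) ^ j / (Nat.factorial j : ℝ))
      (∑ j ∈ Finset.range (ℓ + 1), x ^ j / (Nat.factorial j : ℝ))]
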